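/- Let ϕ : ℝ² → ℝ be smooth near 0 with ϕ₂ ≡ 0 and ϕ₃ ≡ 0 (all derivatives of ϕ of order ≤ 3 vanish at 0). If h(ϕ) ≤ 2, then h_lin(ϕ) = h(ϕ), i.e. the coordinate system is linearly adapted to ϕ. -/

import Mathlib

open MeasureTheory Filter Metric Set
open scoped Topology ENNReal NNReal RealInnerProductSpace

noncomputable section

/-! ### Newton polygon machinery in two dimensions -/

/-- the partial derivative `∂₁ f` -/
def pd1 (f : ℝ × ℝ → ℝ) : ℝ × ℝ → ℝ := fun x => fderiv ℝ f x (1, 0)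

/-- the partial derivative `∂₂ f` -/
def pd2 (f : ℝ × ℝ → ℝ) : ℝ × ℝ → ℝ := fun x => fderiv ℝ f x (0, 1)

/-- the iterated partial derivative `∂₁^{α₁} ∂₂^{α₂} f` -/
def pD (α : ℕ × ℕ) (f : ℝ × ℝ → ℝ) : ℝ × ℝ → ℝ := pd1^[α.1] (pd2^[α.2] f)

/-- the Taylor support of `f` at the origin -/
def taylorSupport (f : ℝ × ℝ → ℝ) : Set (ℕ × ℕ) := {α : ℕ × ℕ | α ≠ 0 ∧ pD α f 0 ≠ 0}

/-- the Newton polygon of `f` at the origin -/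
def newtonPolygon (f : ℝ × ℝ → ℝ) : Set (ℝ × ℝ) :=
  convexHull ℝ (⋃ α ∈ taylorSupport f, {t : ℝ × ℝ | (α.1 : ℝ) ≤ t.1 ∧ (α.2 : ℝ) ≤ t.2})

/-- the Newton distance of `f` at the origin -/
def newtonDist (f : ℝ × ℝ → ℝ) : ℝ := sInf {t : ℝ | 0 < t ∧ (t, t) ∈ newtonPolygon f}

/-- a smooth local coordinate change at the origin of `ℝ²` -/
def IsLocalCoordChange (y : ℝ × ℝ → ℝ × ℝ) : Prop :=
  y 0 = 0 ∧ ∃ U V : Set (ℝ × ℝ), IsOpen U ∧ IsOpen V ∧ (0 : ℝ × ℝ) ∈ U ∧ (0 : ℝ × ℝ) ∈ V ∧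
    ContDiffOn ℝ (⊤ : ℕ∞) y U ∧ MapsTo y U V ∧ ∃ z : ℝ × ℝ → ℝ × ℝ,
      ContDiffOn ℝ (⊤ : ℕ∞) z V ∧ MapsTo z V U ∧
      (∀ x ∈ U, z (y x) = x) ∧ (∀ x ∈ V, y (z x) = x)

/-- the height `h(f)` of `f` -/
def height (f : ℝ × ℝ → ℝ) : ℝ :=
  sSup {d : ℝ | ∃ y : ℝ × ℝ → ℝ × ℝ, IsLocalCoordChange y ∧ d = newtonDist (f ∘ y)}

/-- the linear height `h_lin(f)` of `f` -/
def linHeight (f : ℝ × ℝ → ℝ) : ℝ :=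
  sSup {d : ℝ | ∃ L : (ℝ × ℝ) ≃ₗ[ℝ] ℝ × ℝ, d = newtonDist (f ∘ L)}

/-- the degree `j` homogeneous part of the Taylor series of `f` at the origin -/
def homPart (f : ℝ × ℝ → ℝ) (j : ℕ) : ℝ × ℝ → ℝ := fun x =>
  ∑ α ∈ Finset.HasAntidiagonal.antidiagonal j,
    (pD α f 0 / ((α.1.factorial : ℝ) * (α.2.factorial : ℝ))) * x.1 ^ α.1 * x.2 ^ α.2

/-- the order of vanishing of `P` restricted to the unit circle, at the point
`(cos θ, sin θ)` -/
def circVanish (P : ℝ × ℝ → ℝ) (θ : ℝ) : ℕ∞ :=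
  sSup {k : ℕ∞ | ∀ j : ℕ, (j : ℕ∞) < k →
    iteratedDeriv j (fun t => P (Real.cos t, Real.sin t)) θ = 0}

/-- `𝔫(P)`: the maximal order of vanishing of `P` along the unit circle -/
def nmax (P : ℝ × ℝ → ℝ) : ℕ∞ := ⨆ θ : ℝ, circVanish P θ

/-! ### `D`-type singularities -/

/-- the data of a normal form of a `D_{n+1}`-type singularity (`n = ⊤` means `D_∞`):
after the linear change of variables `L`, on an `ε`-ball around the origin,
`ϕ = b(x)·(x₂ - x₁^m ω(x₁))² + b₀(x₁)` with `b(0,0) = 0`, `∂₁b(0,0) ≠ 0`, `∂₂b(0,0) = 0`,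
`ω(0) ≠ 0`, and `b₀(x₁) = x₁ⁿ β(x₁)`, `β(0) ≠ 0` (case `n < ∞`), or `b₀` flat (case `n = ⊤`). -/
def DSingData (ϕ : ℝ × ℝ → ℝ) (m : ℕ) (n : ℕ∞) (L : (ℝ × ℝ) ≃ₗ[ℝ] ℝ × ℝ)
    (b : ℝ × ℝ → ℝ) (b0 ω : ℝ → ℝ) (ε : ℝ) : Prop :=
  0 < ε ∧ ContDiffOn ℝ (⊤ : ℕ∞) b (ball 0 ε) ∧ ContDiffOn ℝ (⊤ : ℕ∞) b0 (ball 0 ε) ∧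
    ContDiffOn ℝ (⊤ : ℕ∞) ω (ball 0 ε) ∧
    (∀ x ∈ ball (0 : ℝ × ℝ) ε, ϕ (L x) = b x * (x.2 - x.1 ^ m * ω x.1) ^ 2 + b0 x.1) ∧
    b 0 = 0 ∧ pd1 b 0 ≠ 0 ∧ pd2 b 0 = 0 ∧ ω 0 ≠ 0 ∧
    ((∃ n' : ℕ, n = (n' : ℕ∞) ∧ ∃ β : ℝ → ℝ, ContDiffOn ℝ (⊤ : ℕ∞) β (ball 0 ε) ∧ β 0 ≠ 0 ∧
        ∀ x₁ ∈ ball (0 : ℝ) ε, b0 x₁ = x₁ ^ n' * β x₁) ∨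
      (n = ⊤ ∧ ∀ j : ℕ, iteratedDeriv j b0 0 = 0))

/-- `ϕ` has a singularity of type `D_{n+1}` with parameters `(m, n)` -/
def DSing (ϕ : ℝ × ℝ → ℝ) (m : ℕ) (n : ℕ∞) : Prop :=
  2 ≤ m ∧ 3 ≤ n ∧ ∃ (L : (ℝ × ℝ) ≃ₗ[ℝ] ℝ × ℝ) (b : ℝ × ℝ → ℝ) (b0 ω : ℝ → ℝ) (ε : ℝ),
    DSingData ϕ m n L b b0 ω ε

/-- `ϕ` has a singularity of type `D_{n+1}` with parameters `(m, n)` and satisfies the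
`R`-condition: `b₀ ≡ 0` in the case `n = ∞`. -/
def DSingR (ϕ : ℝ × ℝ → ℝ) (m : ℕ) (n : ℕ∞) : Prop :=
  2 ≤ m ∧ 3 ≤ n ∧ ∃ (L : (ℝ × ℝ) ≃ₗ[ℝ] ℝ × ℝ) (b : ℝ × ℝ → ℝ) (b0 ω : ℝ → ℝ) (ε : ℝ),
    DSingData ϕ m n L b b0 ω ε ∧ (n = ⊤ → ∀ x₁ : ℝ, b0 x₁ = 0)

/-- the real value of `n ∈ ℕ∞`, with `∞ ↦ 0` (so that `c / enr ∞ = 0`, matching the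
convention that terms with `n` in the denominator are interpreted as `0` for `n = ∞`). -/
def enr (n : ℕ∞) : ℝ := (WithTop.untopD 0 n : ℕ)

/-! ### Convolution operators with oscillatory kernels -/

/-- Euclidean space `ℝ^N` -/
abbrev Ed (N : ℕ) : Type := EuclideanSpace ℝ (Fin N)

/-- an amplitude of order `-k`: smooth and homogeneous of degree `-k` for `‖ξ‖ ≥ 1` -/
def IsAmplitude {N : ℕ} (k : ℝ) (a : Ed N → ℂ) : Prop :=
  ContDiff ℝ (⊤ : ℕ∞) a ∧
    ∀ ξ : Ed N, 1 ≤ ‖ξ‖ → ∀ t : ℝ, 1 ≤ t → a (t • ξ) = ((t ^ (-k) : ℝ) : ℂ) * a ξ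

/-- the convolution operator `M_k u = F⁻¹(e^{iφ} a (F u))` on Schwartz functions -/
def Mop {N : ℕ} (φ : Ed N → ℝ) (a : Ed N → ℂ) (u : SchwartzMap (Ed N) ℂ) : Ed N → ℂ :=
  VectorFourier.fourierIntegral Real.fourierChar volume (-innerₗ (Ed N))
    (fun ξ => Complex.exp (Complex.I * (φ ξ : ℂ)) * a ξ *
      VectorFourier.fourierIntegral Real.fourierChar volume (innerₗ (Ed N)) (fun x => u x) ξ)

/-- the operator `M_k` (with phase `φ` and amplitude `a`) is `L^p → L^q` bounded -/
def IsLpBdd {N : ℕ} (φ : Ed N → ℝ) (a : Ed N → ℂ) (p q : ℝ≥0∞) : Prop :=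
  ∃ C : ℝ≥0, ∀ u : SchwartzMap (Ed N) ℂ,
    eLpNorm (Mop φ a u) q volume ≤ (C : ℝ≥0∞) * eLpNorm (fun x => u x) p volume

/-- `Γ` is a conic neighborhood of `v` (contained in `ℝ^N ∖ {0}`) -/
def IsConicNbhd {N : ℕ} (Γ : Set (Ed N)) (v : Ed N) : Prop :=
  IsOpen Γ ∧ v ∈ Γ ∧ (0 : Ed N) ∉ Γ ∧ ∀ ξ ∈ Γ, ∀ t : ℝ, 0 < t → t • ξ ∈ Γ

/-- the local exponent `k_p(v)`, for the pair of conjugate exponents `(p, q)` -/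
def kpLoc {N : ℕ} (φ : Ed N → ℝ) (v : Ed N) (p q : ℝ≥0∞) : ℝ :=
  sInf {k : ℝ | 0 < k ∧ ∃ Γ : Set (Ed N), IsConicNbhd Γ v ∧
    ∀ a : Ed N → ℂ, IsAmplitude k a → Function.support a ⊆ Γ → IsLpBdd φ a p q}

/-- the global exponent `k_p(Σ)`, for the pair of conjugate exponents `(p, q)` -/
def kpGlob {N : ℕ} (φ : Ed N → ℝ) (p q : ℝ≥0∞) : ℝ :=
  sInf {k : ℝ | 0 < k ∧ ∀ a : Ed N → ℂ, IsAmplitude k a → IsLpBdd φ a p q}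

/-- `φ` is smooth away from the origin, positive away from the origin, and positively
homogeneous of degree one -/
def PhiHyp {N : ℕ} (φ : Ed N → ℝ) : Prop :=
  ContDiffOn ℝ (⊤ : ℕ∞) φ {(0 : Ed N)}ᶜ ∧ (∀ ξ : Ed N, ξ ≠ 0 → 0 < φ ξ) ∧
    ∀ t : ℝ, 0 < t → ∀ ξ : Ed N, ξ ≠ 0 → φ (t • ξ) = t * φ ξ

/-- the point `v = (0, 0, 1) ∈ ℝ³` -/
def vpt : Ed 3 := (WithLp.equiv 2 (Fin 3 → ℝ)).symm ![0, 0, 1]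

/-- the point `(x₁, x₂, 1 + ϕ(x₁, x₂)) ∈ ℝ³` -/
def graphPt (ϕ : ℝ × ℝ → ℝ) (x : ℝ × ℝ) : Ed 3 :=
  (WithLp.equiv 2 (Fin 3 → ℝ)).symm ![x.1, x.2, 1 + ϕ x]

/-- near `v = (0,0,1)`, the surface `Σ = {φ = 1}` is the graph of `1 + ϕ` over a
neighborhood `U` of the origin, where `ϕ` is smooth with `ϕ(0,0) = 0`, `∇ϕ(0,0) = 0` -/
def GraphAt (φ : Ed 3 → ℝ) (ϕ : ℝ × ℝ → ℝ) : Prop :=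
  ∃ U ∈ 𝓝 (0 : ℝ × ℝ), ContDiffOn ℝ (⊤ : ℕ∞) ϕ U ∧ ϕ 0 = 0 ∧ fderiv ℝ ϕ 0 = 0 ∧
    ∃ W : Set (Ed 3), IsOpen W ∧ vpt ∈ W ∧ {ξ ∈ W | φ ξ = 1} = graphPt ϕ '' U

/-- the height `h(Σ)` of the surface `Σ = {φ = 1}`: the supremum over points `v ∈ Σ` of the
heights of graph functions of `Σ` at `v`, obtained after a linear change of variables of `ℝ³`
moving `v` to `(0,0,1)` -/
def hSurf (φ : Ed 3 → ℝ) : ℝ :=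
  sSup {h : ℝ | ∃ v : Ed 3, φ v = 1 ∧ ∃ A : Ed 3 ≃ₗ[ℝ] Ed 3, A v = vpt ∧
    ∃ ϕ : ℝ × ℝ → ℝ, GraphAt (φ ∘ A.symm) ϕ ∧ h = height ϕ}

/-- the point `(x, 1 + ϕ(x)) ∈ ℝ^{d+1}` for `x ∈ ℝ^d` -/
def graphPtN {d : ℕ} (ϕ : Ed d → ℝ) (x : Ed d) : Ed (d + 1) :=
  (WithLp.equiv 2 (Fin (d + 1) → ℝ)).symm
    (Fin.snoc ((WithLp.equiv 2 (Fin d → ℝ)) x) (1 + ϕ x))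

/-- the point `v = (0, …, 0, 1) ∈ ℝ^{d+1}` -/
def vptN (d : ℕ) : Ed (d + 1) :=
  (WithLp.equiv 2 (Fin (d + 1) → ℝ)).symm (Fin.snoc (fun _ : Fin d => (0 : ℝ)) 1)

/-- the oscillatory integral `I(λ, s) = ∫ e^{iλ(ϕ(x) + s·x)} g(x) dx` over `ℝ^d` -/
def oscI {d : ℕ} (ϕ : Ed d → ℝ) (g : Ed d → ℂ) (l : ℝ) (s : Ed d) : ℂ :=
  ∫ x : Ed d, Complex.exp (Complex.I * ((l * (ϕ x + ⟪s, x⟫) : ℝ) : ℂ)) * g x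

/-- the oscillatory integral `I(λ, s)` in two dimensions, with `ℝ²` realised as `ℝ × ℝ` -/
def oscI2 (ϕ : ℝ × ℝ → ℝ) (g : ℝ × ℝ → ℂ) (l : ℝ) (s : ℝ × ℝ) : ℂ :=
  ∫ x : ℝ × ℝ, Complex.exp (Complex.I * ((l * (ϕ x + s.1 * x.1 + s.2 * x.2) : ℝ) : ℂ)) * g x


section Aux

open Asymptotics

variable {f g : ℝ × ℝ → ℝ} {U : Set (ℝ × ℝ)}

theorem sm_pd1 (hU : IsOpen U) (hf : ContDiffOn ℝ (⊤ : ℕ∞) f U) :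
    ContDiffOn ℝ (⊤ : ℕ∞) (pd1 f) U := by
  have h := hf.fderiv_of_isOpen (m := ((⊤ : ℕ∞) : WithTop ℕ∞)) hU (by simp)
  exact h.clm_apply contDiffOn_const

theorem sm_pd2 (hU : IsOpen U) (hf : ContDiffOn ℝ (⊤ : ℕ∞) f U) :
    ContDiffOn ℝ (⊤ : ℕ∞) (pd2 f) U := by
  have h := hf.fderiv_of_isOpen (m := ((⊤ : ℕ∞) : WithTop ℕ∞)) hU (by simp)
  exact h.clm_apply contDiffOn_const

theorem sm_pd2_iter (hU : IsOpen U) (hf : ContDiffOn ℝ (⊤ : ℕ∞) f U) (b : ℕ) :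
    ContDiffOn ℝ (⊤ : ℕ∞) (pd2^[b] f) U := by
  induction b with
  | zero => simpa using hf
  | succ b ih => rw [Function.iterate_succ_apply']; exact sm_pd2 hU ih

theorem sm_pd1_iter (hU : IsOpen U) (hf : ContDiffOn ℝ (⊤ : ℕ∞) f U) (a : ℕ) :
    ContDiffOn ℝ (⊤ : ℕ∞) (pd1^[a] f) U := by
  induction a with
  | zero => simpa using hf
  | succ a ih => rw [Function.iterate_succ_apply']; exact sm_pd1 hU ih

theorem sm_pD (hU : IsOpen U) (hf : ContDiffOn ℝ (⊤ : ℕ∞) f U) (α : ℕ × ℕ) :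
    ContDiffOn ℝ (⊤ : ℕ∞) (pD α f) U :=
  sm_pd1_iter hU (sm_pd2_iter hU hf α.2) α.1

theorem diffAt (hU : IsOpen U) (hf : ContDiffOn ℝ (⊤ : ℕ∞) f U) {x : ℝ × ℝ} (hx : x ∈ U) :
    DifferentiableAt ℝ f x :=
  (hf.differentiableOn (by simp)).differentiableAt (hU.mem_nhds hx)

theorem cong_pd1 (hU : IsOpen U) (h : ∀ x ∈ U, f x = g x) : ∀ x ∈ U, pd1 f x = pd1 g x := by
  intro x hx
  have : f =ᶠ[nhds x] g := Filter.eventuallyEq_of_mem (hU.mem_nhds hx) h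
  simp only [pd1, this.fderiv_eq]

theorem cong_pd2 (hU : IsOpen U) (h : ∀ x ∈ U, f x = g x) : ∀ x ∈ U, pd2 f x = pd2 g x := by
  intro x hx
  have : f =ᶠ[nhds x] g := Filter.eventuallyEq_of_mem (hU.mem_nhds hx) h
  simp only [pd2, this.fderiv_eq]

theorem cong_pd1_iter (hU : IsOpen U) (a : ℕ) (h : ∀ x ∈ U, f x = g x) :
    ∀ x ∈ U, pd1^[a] f x = pd1^[a] g x := by
  induction a with
  | zero => simpa using h
  | succ a ih =>
      intro x hx
      rw [Function.iterate_succ_apply', Function.iterate_succ_apply']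
      exact cong_pd1 hU ih x hx

/-- Schwarz symmetry -/
theorem schwarz (hU : IsOpen U) (hf : ContDiffOn ℝ (⊤ : ℕ∞) f U) {x : ℝ × ℝ} (hx : x ∈ U) :
    pd1 (pd2 f) x = pd2 (pd1 f) x := by
  have hf' : ContDiffOn ℝ (⊤ : ℕ∞) (fderiv ℝ f) U :=
    hf.fderiv_of_isOpen (m := ((⊤ : ℕ∞) : WithTop ℕ∞)) hU (by simp)
  have hd : DifferentiableAt ℝ (fderiv ℝ f) x :=
    (hf'.differentiableOn (by simp)).differentiableAt (hU.mem_nhds hx)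
  have hev : ∀ᶠ y in nhds x, HasFDerivAt f (fderiv ℝ f y) y := by
    filter_upwards [hU.mem_nhds hx] with y hy
    exact (diffAt hU hf hy).hasFDerivAt
  have hsymm := second_derivative_symmetric_of_eventually hev hd.hasFDerivAt
  have e1 : pd1 (pd2 f) x = fderiv ℝ (fderiv ℝ f) x (1, 0) (0, 1) := by
    have : pd2 f = fun y => (fderiv ℝ f y) ((0 : ℝ), (1 : ℝ)) := rfl
    rw [pd1, this, fderiv_clm_apply hd (differentiableAt_const _)]
    simp
  have e2 : pd2 (pd1 f) x = fderiv ℝ (fderiv ℝ f) x (0, 1) (1, 0) := by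
    have : pd1 f = fun y => (fderiv ℝ f y) ((1 : ℝ), (0 : ℝ)) := rfl
    rw [pd2, this, fderiv_clm_apply hd (differentiableAt_const _)]
    simp
  rw [e1, e2, hsymm]

/-- commuting: pd2^[b] (pd1 f) = pd1 (pd2^[b] f) on U -/
theorem comm_pd (hU : IsOpen U) (hf : ContDiffOn ℝ (⊤ : ℕ∞) f U) (b : ℕ) :
    ∀ x ∈ U, pd2^[b] (pd1 f) x = pd1 (pd2^[b] f) x := by
  induction b with
  | zero => intro x _; simp
  | succ b ih =>
      intro x hx
      rw [Function.iterate_succ_apply', Function.iterate_succ_apply']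
      have h1 : pd2 (pd2^[b] (pd1 f)) x = pd2 (pd1 (pd2^[b] f)) x := cong_pd2 hU ih x hx
      rw [h1, ← schwarz hU (sm_pd2_iter hU hf b) hx]

def VanishTo (k : ℕ) (f : ℝ × ℝ → ℝ) : Prop := ∀ α : ℕ × ℕ, α.1 + α.2 ≤ k → pD α f 0 = 0

theorem vanish_pd1 (hU : IsOpen U) (h0 : (0 : ℝ × ℝ) ∈ U) (hf : ContDiffOn ℝ (⊤ : ℕ∞) f U)
    {k : ℕ} (hv : VanishTo (k + 1) f) : VanishTo k (pd1 f) := by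
  intro α hα
  have h1 : ∀ x ∈ U, pd2^[α.2] (pd1 f) x = pd1 (pd2^[α.2] f) x := comm_pd hU hf α.2
  have h2 : pd1^[α.1] (pd2^[α.2] (pd1 f)) 0 = pd1^[α.1] (pd1 (pd2^[α.2] f)) 0 :=
    cong_pd1_iter hU α.1 h1 0 h0
  have h3 : pd1^[α.1] (pd1 (pd2^[α.2] f)) 0 = pd1^[α.1 + 1] (pd2^[α.2] f) 0 := by
    rw [Function.iterate_succ_apply]
  have h4 : pD α (pd1 f) 0 = pd1^[α.1] (pd2^[α.2] (pd1 f)) 0 := rfl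
  have h5 : pD (α.1 + 1, α.2) f 0 = pd1^[α.1] (pd1 (pd2^[α.2] f)) 0 := by
    rw [pD, ← Function.iterate_succ_apply]
  rw [h4, h2, ← h5]
  exact hv (α.1 + 1, α.2) (by omega)

theorem vanish_pd2 {k : ℕ} (hv : VanishTo (k + 1) f) : VanishTo k (pd2 f) := by
  intro α hα
  have := hv (α.1, α.2 + 1) (by omega)
  simpa [pD, Function.iterate_succ_apply] using this

/-- Lemma A: vanishing of partials up to order k implies littleO -/
theorem vanish_isLittleO (hU : IsOpen U) (h0 : (0 : ℝ × ℝ) ∈ U) (k : ℕ) :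
    ∀ f : ℝ × ℝ → ℝ, ContDiffOn ℝ (⊤ : ℕ∞) f U → VanishTo k f →
      (fun x => f x) =o[nhds (0 : ℝ × ℝ)] (fun x => ‖x‖ ^ k) := by
  induction k with
  | zero =>
      intro f hf hv
      have hf0 : f 0 = 0 := by simpa [pD] using hv (0, 0) (by simp)
      simp only [pow_zero]
      rw [show (fun _ : ℝ × ℝ => (1 : ℝ)) = (fun _ : ℝ × ℝ => (1 : ℝ)) from rfl]
      refine (isLittleO_one_iff ℝ).2 ?_
      have := (hf.continuousOn.continuousAt (hU.mem_nhds h0)).tendsto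
      rwa [hf0] at this
  | succ k ih =>
      intro f hf hv
      have hf0 : f 0 = 0 := by simpa [pD] using hv (0, 0) (by simp)
      have h1 := ih (pd1 f) (sm_pd1 hU hf) (vanish_pd1 hU h0 hf hv)
      have h2 := ih (pd2 f) (sm_pd2 hU hf) (vanish_pd2 hv)
      rw [isLittleO_iff]
      intro c hc
      have hc2 : 0 < c / 2 := by linarith
      have e1 := (isLittleO_iff.1 h1) hc2
      have e2 := (isLittleO_iff.1 h2) hc2
      have eU : ∀ᶠ x in nhds (0 : ℝ × ℝ), x ∈ U := hU.mem_nhds h0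
      rcases Metric.eventually_nhds_iff_ball.1 (e1.and (e2.and eU)) with ⟨r, hr, hball⟩
      rw [Metric.eventually_nhds_iff_ball]
      refine ⟨r, hr, fun x hx => ?_⟩
      -- bound on the closed ball of radius ‖x‖
      have hsub : closedBall (0 : ℝ × ℝ) ‖x‖ ⊆ ball (0 : ℝ × ℝ) r := by
        intro y hy
        rw [mem_closedBall, dist_zero_right] at hy
        rw [mem_ball, dist_zero_right]
        rw [mem_ball, dist_zero_right] at hx
        linarith
      have hdiff : ∀ y ∈ closedBall (0 : ℝ × ℝ) ‖x‖, DifferentiableAt ℝ f y :=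
        fun y hy => diffAt hU hf ((hball y (hsub hy)).2.2)
      have hbound : ∀ y ∈ closedBall (0 : ℝ × ℝ) ‖x‖, ‖fderiv ℝ f y‖ ≤ c * ‖x‖ ^ k := by
        intro y hy
        have hyx : ‖y‖ ≤ ‖x‖ := by simpa [dist_zero_right] using hy
        have hb1 : ‖pd1 f y‖ ≤ c / 2 * ‖y‖ ^ k := by
          have := (hball y (hsub hy)).1
          simpa [norm_pow, abs_of_nonneg (norm_nonneg y)] using this
        have hb2 : ‖pd2 f y‖ ≤ c / 2 * ‖y‖ ^ k := by
          have := (hball y (hsub hy)).2.1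
          simpa [norm_pow, abs_of_nonneg (norm_nonneg y)] using this
        refine ContinuousLinearMap.opNorm_le_bound _ (by positivity) fun v => ?_
        have hrepr : fderiv ℝ f y v = v.1 * pd1 f y + v.2 * pd2 f y := by
          have hv' : v = v.1 • ((1 : ℝ), (0 : ℝ)) + v.2 • ((0 : ℝ), (1 : ℝ)) := by
            simp [Prod.ext_iff]
          calc fderiv ℝ f y v
              = fderiv ℝ f y (v.1 • ((1 : ℝ), (0 : ℝ)) + v.2 • ((0 : ℝ), (1 : ℝ))) :=
                congrArg _ hv'
            _ = v.1 * pd1 f y + v.2 * pd2 f y := by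
                rw [map_add, _root_.map_smul, _root_.map_smul]; simp [pd1, pd2, smul_eq_mul]
        rw [hrepr]
        have hv1 : |v.1| ≤ ‖v‖ := by
          simpa using norm_fst_le v
        have hv2 : |v.2| ≤ ‖v‖ := by
          simpa using norm_snd_le v
        calc |v.1 * pd1 f y + v.2 * pd2 f y| ≤ |v.1 * pd1 f y| + |v.2 * pd2 f y| := abs_add_le _ _
          _ = |v.1| * ‖pd1 f y‖ + |v.2| * ‖pd2 f y‖ := by rw [abs_mul, abs_mul]; rfl
          _ ≤ ‖v‖ * (c / 2 * ‖y‖ ^ k) + ‖v‖ * (c / 2 * ‖y‖ ^ k) :=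
              add_le_add (mul_le_mul hv1 hb1 (norm_nonneg _) (norm_nonneg v))
                (mul_le_mul hv2 hb2 (norm_nonneg _) (norm_nonneg v))
          _ = c * ‖y‖ ^ k * ‖v‖ := by ring
          _ ≤ c * ‖x‖ ^ k * ‖v‖ :=
              mul_le_mul_of_nonneg_right
                (mul_le_mul_of_nonneg_left (pow_le_pow_left₀ (norm_nonneg y) hyx k) hc.le)
                (norm_nonneg v)
        -- done
      have hmvt := Convex.norm_image_sub_le_of_norm_fderiv_le hdiff hbound
        (convex_closedBall _ _) (mem_closedBall_self (norm_nonneg x))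
        (mem_closedBall.2 (by rw [dist_zero_right]))
      rw [hf0, sub_zero, sub_zero] at hmvt
      calc ‖f x‖ ≤ c * ‖x‖ ^ k * ‖x‖ := hmvt
        _ = c * ‖x‖ ^ (k + 1) := by ring
        _ = c * ‖‖x‖ ^ (k + 1)‖ := by
            rw [Real.norm_of_nonneg (by positivity)]

/-- Lemma C: composition preserves littleO -/
theorem isLittleO_comp {f : ℝ × ℝ → ℝ} {g : ℝ × ℝ → ℝ × ℝ} {k : ℕ}
    (hf : f =o[nhds (0 : ℝ × ℝ)] (fun x => ‖x‖ ^ k))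
    (hg : DifferentiableAt ℝ g 0) (hg0 : g 0 = 0) :
    (fun x => f (g x)) =o[nhds (0 : ℝ × ℝ)] (fun x => ‖x‖ ^ k) := by
  have hgc : Filter.Tendsto g (nhds 0) (nhds (0 : ℝ × ℝ)) := by
    have := hg.continuousAt.tendsto
    rwa [hg0] at this
  have h1 : (fun x => f (g x)) =o[nhds (0 : ℝ × ℝ)] (fun x => ‖g x‖ ^ k) :=
    hf.comp_tendsto hgc
  have hO : (fun x => g x) =O[nhds (0 : ℝ × ℝ)] (fun x : ℝ × ℝ => x) := by
    have := hg.isBigO_sub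
    simpa [hg0] using this
  have h2 : (fun x => ‖g x‖ ^ k) =O[nhds (0 : ℝ × ℝ)] (fun x => ‖x‖ ^ k) := by
    have := (hO.norm_norm).pow k
    simpa using this
  exact h1.trans_isBigO h2

/-- derivative of a monomial -/
theorem hasFDerivAt_mono (r : ℝ) (a d : ℕ) (x : ℝ × ℝ) :
    HasFDerivAt (fun x : ℝ × ℝ => r * x.1 ^ a * x.2 ^ d)
      ((r * a * x.1 ^ (a - 1) * x.2 ^ d) • ContinuousLinearMap.fst ℝ ℝ ℝ +
        (r * d * x.1 ^ a * x.2 ^ (d - 1)) • ContinuousLinearMap.snd ℝ ℝ ℝ) x := by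
  have h1 : HasFDerivAt (fun x : ℝ × ℝ => x.1 ^ a)
      (((a : ℝ) * x.1 ^ (a - 1)) • ContinuousLinearMap.fst ℝ ℝ ℝ) x :=
    (hasDerivAt_pow a x.1).comp_hasFDerivAt x (hasFDerivAt_fst (p := x))
  have h2 : HasFDerivAt (fun x : ℝ × ℝ => x.2 ^ d)
      (((d : ℝ) * x.2 ^ (d - 1)) • ContinuousLinearMap.snd ℝ ℝ ℝ) x :=
    (hasDerivAt_pow d x.2).comp_hasFDerivAt x (hasFDerivAt_snd (p := x))
  have h3 := (h1.fun_mul h2).const_mul r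
  have heq : (fun x : ℝ × ℝ => r * (x.1 ^ a * x.2 ^ d)) =
      (fun x : ℝ × ℝ => r * x.1 ^ a * x.2 ^ d) := by
    funext y; ring
  rw [heq] at h3
  refine h3.congr_fderiv ?_
  refine ContinuousLinearMap.ext fun v => ?_
  simp [smul_eq_mul]
  ring

theorem pd1_mono (r : ℝ) (a d : ℕ) (x : ℝ × ℝ) :
    pd1 (fun x : ℝ × ℝ => r * x.1 ^ a * x.2 ^ d) x = r * a * x.1 ^ (a - 1) * x.2 ^ d := by
  rw [pd1, (hasFDerivAt_mono r a d x).fderiv]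
  simp

theorem pd2_mono (r : ℝ) (a d : ℕ) (x : ℝ × ℝ) :
    pd2 (fun x : ℝ × ℝ => r * x.1 ^ a * x.2 ^ d) x = r * d * x.1 ^ a * x.2 ^ (d - 1) := by
  rw [pd2, (hasFDerivAt_mono r a d x).fderiv]
  simp

/-- pd2 of a sum of monomials -/
theorem pd2_monosum {ι : Type*} (s : Finset ι) (g : ι → ℝ) (a d : ι → ℕ) :
    pd2 (fun x : ℝ × ℝ => ∑ i ∈ s, g i * x.1 ^ a i * x.2 ^ d i) =
      fun x => ∑ i ∈ s, (g i * d i) * x.1 ^ a i * x.2 ^ (d i - 1) := by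
  funext x
  rw [pd2, fderiv_fun_sum (fun i _ => (hasFDerivAt_mono (g i) (a i) (d i) x).differentiableAt)]
  rw [ContinuousLinearMap.sum_apply]
  refine Finset.sum_congr rfl fun i _ => ?_
  have : fderiv ℝ (fun x : ℝ × ℝ => g i * x.1 ^ a i * x.2 ^ d i) x (0, 1) =
      pd2 (fun x : ℝ × ℝ => g i * x.1 ^ a i * x.2 ^ d i) x := rfl
  rw [this, pd2_mono]

theorem pd1_monosum {ι : Type*} (s : Finset ι) (g : ι → ℝ) (a d : ι → ℕ) :
    pd1 (fun x : ℝ × ℝ => ∑ i ∈ s, g i * x.1 ^ a i * x.2 ^ d i) =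
      fun x => ∑ i ∈ s, (g i * a i) * x.1 ^ (a i - 1) * x.2 ^ d i := by
  funext x
  rw [pd1, fderiv_fun_sum (fun i _ => (hasFDerivAt_mono (g i) (a i) (d i) x).differentiableAt)]
  rw [ContinuousLinearMap.sum_apply]
  refine Finset.sum_congr rfl fun i _ => ?_
  have : fderiv ℝ (fun x : ℝ × ℝ => g i * x.1 ^ a i * x.2 ^ d i) x (1, 0) =
      pd1 (fun x : ℝ × ℝ => g i * x.1 ^ a i * x.2 ^ d i) x := rfl
  rw [this, pd1_mono]

theorem pd2_iter_monosum {ι : Type*} (s : Finset ι) (g : ι → ℝ) (a d : ι → ℕ) (b : ℕ) :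
    pd2^[b] (fun x : ℝ × ℝ => ∑ i ∈ s, g i * x.1 ^ a i * x.2 ^ d i) =
      fun x => ∑ i ∈ s, (g i * (d i).descFactorial b) * x.1 ^ a i * x.2 ^ (d i - b) := by
  induction b with
  | zero => simp
  | succ b ih =>
      rw [Function.iterate_succ_apply', ih, pd2_monosum]
      funext x
      refine Finset.sum_congr rfl fun i _ => ?_
      rw [Nat.descFactorial_succ]
      have : d i - b - 1 = d i - (b + 1) := by omega
      rw [this]
      push_cast
      ring

theorem pd1_iter_monosum {ι : Type*} (s : Finset ι) (g : ι → ℝ) (a d : ι → ℕ) (b : ℕ) :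
    pd1^[b] (fun x : ℝ × ℝ => ∑ i ∈ s, g i * x.1 ^ a i * x.2 ^ d i) =
      fun x => ∑ i ∈ s, (g i * (a i).descFactorial b) * x.1 ^ (a i - b) * x.2 ^ d i := by
  induction b with
  | zero => simp
  | succ b ih =>
      rw [Function.iterate_succ_apply', ih, pd1_monosum]
      funext x
      refine Finset.sum_congr rfl fun i _ => ?_
      rw [Nat.descFactorial_succ]
      have : a i - b - 1 = a i - (b + 1) := by omega
      rw [this]
      push_cast
      ring

/-- index set of monomials of degree at most `k` -/
def Ak (k : ℕ) : Finset (ℕ × ℕ) :=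
  Finset.filter (fun α : ℕ × ℕ => α.1 + α.2 ≤ k)
    (Finset.range (k + 1) ×ˢ Finset.range (k + 1))

theorem mem_Ak {k : ℕ} {α : ℕ × ℕ} : α ∈ Ak k ↔ α.1 + α.2 ≤ k := by
  simp only [Ak, Finset.mem_filter, Finset.mem_product, Finset.mem_range]
  omega

theorem pD_monosum (c : ℕ × ℕ → ℝ) (s : Finset (ℕ × ℕ)) (a b : ℕ) :
    pD (a, b) (fun x : ℝ × ℝ => ∑ β ∈ s, c β * x.1 ^ β.1 * x.2 ^ β.2) 0 =
      ∑ β ∈ s, (c β * (β.1.descFactorial a) * (β.2.descFactorial b)) *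
        (0 : ℝ) ^ (β.1 - a) * (0 : ℝ) ^ (β.2 - b) := by
  have h1 := pd2_iter_monosum s c (fun β => β.1) (fun β => β.2) b
  have h2 := pd1_iter_monosum s (fun β => c β * (β.2.descFactorial b))
    (fun β => β.1) (fun β => β.2 - b) a
  rw [pD]
  rw [h1, h2]
  simp only [Prod.fst_zero, Prod.snd_zero]
  refine Finset.sum_congr rfl fun β _ => ?_
  ring

theorem pD_P_zero {k : ℕ} (c : ℕ × ℕ → ℝ) {α : ℕ × ℕ} (hα : α ∈ Ak k) :
    pD α (fun x : ℝ × ℝ => ∑ β ∈ Ak k, c β * x.1 ^ β.1 * x.2 ^ β.2) 0 =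
      c α * α.1.factorial * α.2.factorial := by
  obtain ⟨a, b⟩ := α
  rw [pD_monosum]
  rw [Finset.sum_eq_single (a, b)]
  · simp [Nat.descFactorial_self]
  · intro β hβ hne
    rcases Nat.lt_trichotomy β.1 a with h | h | h
    · have : β.1.descFactorial a = 0 := Nat.descFactorial_eq_zero_iff_lt.2 h
      simp [this]
    · have hb2 : β.2 ≠ b := by
        intro hb
        exact hne (Prod.ext h hb)
      rcases Nat.lt_trichotomy β.2 b with h2 | h2 | h2
      · have : β.2.descFactorial b = 0 := Nat.descFactorial_eq_zero_iff_lt.2 h2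
        simp [this]
      · exact absurd h2 hb2
      · have : (0 : ℝ) ^ (β.2 - b) = 0 := zero_pow (by omega)
        simp [this]
    · have : (0 : ℝ) ^ (β.1 - a) = 0 := zero_pow (by omega)
      simp [this]
  · intro h
    exact absurd hα h

/-- pD of a difference -/
theorem pd2_iter_sub {f g : ℝ × ℝ → ℝ} {U : Set (ℝ × ℝ)} (hU : IsOpen U)
    (hf : ContDiffOn ℝ (⊤ : ℕ∞) f U) (hg : ContDiffOn ℝ (⊤ : ℕ∞) g U) (b : ℕ) :
    ∀ x ∈ U, pd2^[b] (fun w => f w - g w) x = pd2^[b] f x - pd2^[b] g x := by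
  induction b with
  | zero => intro x _; simp
  | succ b ih =>
      intro x hx
      rw [Function.iterate_succ_apply', Function.iterate_succ_apply',
        Function.iterate_succ_apply']
      have h1 : pd2 (pd2^[b] (fun w => f w - g w)) x =
          pd2 (fun w => pd2^[b] f w - pd2^[b] g w) x := cong_pd2 hU ih x hx
      rw [h1, pd2]
      rw [fderiv_fun_sub (diffAt hU (sm_pd2_iter hU hf b) hx) (diffAt hU (sm_pd2_iter hU hg b) hx)]
      rfl

theorem pd1_iter_sub {f g : ℝ × ℝ → ℝ} {U : Set (ℝ × ℝ)} (hU : IsOpen U)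
    (hf : ContDiffOn ℝ (⊤ : ℕ∞) f U) (hg : ContDiffOn ℝ (⊤ : ℕ∞) g U) (a : ℕ) :
    ∀ x ∈ U, pd1^[a] (fun w => f w - g w) x = pd1^[a] f x - pd1^[a] g x := by
  induction a with
  | zero => intro x _; simp
  | succ a ih =>
      intro x hx
      rw [Function.iterate_succ_apply', Function.iterate_succ_apply',
        Function.iterate_succ_apply']
      have h1 : pd1 (pd1^[a] (fun w => f w - g w)) x =
          pd1 (fun w => pd1^[a] f w - pd1^[a] g w) x := cong_pd1 hU ih x hx
      rw [h1, pd1]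
      rw [fderiv_fun_sub (diffAt hU (sm_pd1_iter hU hf a) hx) (diffAt hU (sm_pd1_iter hU hg a) hx)]
      rfl

theorem pD_sub {f g : ℝ × ℝ → ℝ} {U : Set (ℝ × ℝ)} (hU : IsOpen U)
    (hf : ContDiffOn ℝ (⊤ : ℕ∞) f U) (hg : ContDiffOn ℝ (⊤ : ℕ∞) g U) (α : ℕ × ℕ)
    {x : ℝ × ℝ} (hx : x ∈ U) :
    pD α (fun w => f w - g w) x = pD α f x - pD α g x := by
  rw [pD]
  have h1 : ∀ y ∈ U, pd2^[α.2] (fun w => f w - g w) y =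
      (fun w => pd2^[α.2] f w - pd2^[α.2] g w) y := pd2_iter_sub hU hf hg α.2
  rw [cong_pd1_iter hU α.1 h1 x hx]
  exact pd1_iter_sub hU (sm_pd2_iter hU hf α.2) (sm_pd2_iter hU hg α.2) α.1 x hx

/-- a polynomial of degree at most `k` that is `o(‖x‖^k)` vanishes identically -/
theorem poly_vanish {k : ℕ} (c : ℕ × ℕ → ℝ)
    (hP : (fun x : ℝ × ℝ => ∑ β ∈ Ak k, c β * x.1 ^ β.1 * x.2 ^ β.2)
      =o[nhds (0 : ℝ × ℝ)] fun x => ‖x‖ ^ k) :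
    ∀ α ∈ Ak k, c α = 0 := by
  by_contra hcon
  push_neg at hcon
  obtain ⟨α₀, hα₀A, hα₀⟩ := hcon
  set Bad : Finset (ℕ × ℕ) := (Ak k).filter (fun α => c α ≠ 0) with hBad
  have hBadne : Bad.Nonempty := ⟨α₀, Finset.mem_filter.2 ⟨hα₀A, hα₀⟩⟩
  set jset := Bad.image (fun α : ℕ × ℕ => α.1 + α.2) with hjset
  have hjsetne : jset.Nonempty := hBadne.image _
  set j := jset.min' hjsetne with hj
  obtain ⟨α₁, hα₁Bad, hα₁j⟩ := Finset.mem_image.1 (jset.min'_mem hjsetne)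
  have hα₁A : α₁ ∈ Ak k := (Finset.mem_filter.1 hα₁Bad).1
  have hα₁c : c α₁ ≠ 0 := (Finset.mem_filter.1 hα₁Bad).2
  have hjk : j ≤ k := by
    have h := mem_Ak.1 hα₁A
    omega
  have hjmin : ∀ β ∈ Ak k, β.1 + β.2 < j → c β = 0 := by
    intro β hβ hlt
    by_contra hcβ
    have : β.1 + β.2 ∈ jset := Finset.mem_image.2 ⟨β, Finset.mem_filter.2 ⟨hβ, hcβ⟩, rfl⟩
    exact absurd (jset.min'_le _ this) (by omega)
  set Aj : Finset (ℕ × ℕ) := (Ak k).filter (fun β => j ≤ β.1 + β.2) with hAj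
  -- P equals the sum over Aj
  have hPsum : ∀ x : ℝ × ℝ, (∑ β ∈ Ak k, c β * x.1 ^ β.1 * x.2 ^ β.2) =
      ∑ β ∈ Aj, c β * x.1 ^ β.1 * x.2 ^ β.2 := by
    intro x
    refine (Finset.sum_subset (Finset.filter_subset _ _) ?_).symm
    intro β hβ hβn
    have : β.1 + β.2 < j := by
      by_contra h
      exact hβn (Finset.mem_filter.2 ⟨hβ, by omega⟩)
    rw [hjmin β hβ this]
    ring
  -- key limit: the degree-j homogeneous part vanishes
  have hs2 : ∀ v : ℝ × ℝ,
      (∑ β ∈ Aj.filter (fun β => β.1 + β.2 = j), c β * v.1 ^ β.1 * v.2 ^ β.2) = 0 := by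
    intro v
    set R : ℝ → ℝ := fun t => ∑ β ∈ Aj, c β * v.1 ^ β.1 * v.2 ^ β.2 * t ^ (β.1 + β.2 - j)
      with hR
    have hRcont : Continuous R := by
      apply continuous_finset_sum
      intro β _
      exact continuous_const.mul (continuous_pow _)
    have hT1 : Filter.Tendsto R (nhdsWithin 0 {(0:ℝ)}ᶜ) (nhds (R 0)) :=
      (hRcont.tendsto 0).mono_left nhdsWithin_le_nhds
    have hcomp : Filter.Tendsto (fun t : ℝ => t • v) (nhdsWithin 0 {(0:ℝ)}ᶜ)
        (nhds (0 : ℝ × ℝ)) := by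
      have : Filter.Tendsto (fun t : ℝ => t • v) (nhds 0) (nhds ((0:ℝ) • v)) :=
        (continuous_id.smul continuous_const).tendsto 0
      rw [zero_smul] at this
      exact this.mono_left nhdsWithin_le_nhds
    have h1 := hP.comp_tendsto hcomp
    have h2 : (fun t : ℝ => ‖t • v‖ ^ k) =O[nhdsWithin 0 {(0:ℝ)}ᶜ] fun t => t ^ j := by
      rw [Asymptotics.isBigO_iff]
      refine ⟨‖v‖ ^ k, ?_⟩
      have hsmall : ∀ᶠ t : ℝ in nhdsWithin 0 {(0:ℝ)}ᶜ, |t| ≤ 1 := by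
        apply Filter.Eventually.filter_mono nhdsWithin_le_nhds
        have : ∀ᶠ t : ℝ in nhds 0, t ∈ Metric.ball (0:ℝ) 1 :=
          Metric.isOpen_ball.mem_nhds (by simp)
        filter_upwards [this] with t ht
        rw [Metric.mem_ball, Real.dist_eq, sub_zero] at ht
        linarith
      filter_upwards [hsmall] with t ht
      have : ‖t • v‖ ^ k = |t| ^ k * ‖v‖ ^ k := by
        rw [norm_smul, mul_pow]; rfl
      rw [Real.norm_of_nonneg (by positivity), this]
      have hle : |t| ^ k ≤ |t| ^ j := pow_le_pow_of_le_one (abs_nonneg t) ht hjk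
      calc |t| ^ k * ‖v‖ ^ k ≤ |t| ^ j * ‖v‖ ^ k := by
            exact mul_le_mul_of_nonneg_right hle (by positivity)
        _ = ‖v‖ ^ k * ‖t ^ j‖ := by
            rw [norm_pow, Real.norm_eq_abs]; ring
    have h3 := h1.trans_isBigO h2
    have h4 := h3.tendsto_div_nhds_zero
    have heq : ∀ᶠ t : ℝ in nhdsWithin 0 {(0:ℝ)}ᶜ,
        (∑ β ∈ Ak k, c β * (t • v).1 ^ β.1 * (t • v).2 ^ β.2) / t ^ j = R t := by
      filter_upwards [self_mem_nhdsWithin] with t ht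
      have ht' : t ≠ 0 := ht
      have hPt : (∑ β ∈ Ak k, c β * (t • v).1 ^ β.1 * (t • v).2 ^ β.2) = t ^ j * R t := by
        rw [hPsum (t • v), hR, Finset.mul_sum]
        refine Finset.sum_congr rfl fun β hβ => ?_
        have hjβ : j ≤ β.1 + β.2 := (Finset.mem_filter.1 hβ).2
        have h1' : (t • v).1 = t * v.1 := rfl
        have h2' : (t • v).2 = t * v.2 := rfl
        rw [h1', h2', mul_pow, mul_pow]
        have : t ^ β.1 * t ^ β.2 = t ^ j * t ^ (β.1 + β.2 - j) := by
          rw [← pow_add, ← pow_add]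
          congr 1
          omega
        linear_combination (c β * v.1 ^ β.1 * v.2 ^ β.2) * this
      rw [hPt, mul_div_cancel_left₀ _ (pow_ne_zero j ht')]
    have h5 : Filter.Tendsto R (nhdsWithin 0 {(0:ℝ)}ᶜ) (nhds 0) := by
      refine Filter.Tendsto.congr' heq ?_
      exact h4
    have hR0 : R 0 = 0 := tendsto_nhds_unique hT1 h5
    -- compute R 0
    rw [hR] at hR0
    simp only at hR0
    have : (∑ β ∈ Aj, c β * v.1 ^ β.1 * v.2 ^ β.2 * (0:ℝ) ^ (β.1 + β.2 - j)) =
        ∑ β ∈ Aj.filter (fun β => β.1 + β.2 = j), c β * v.1 ^ β.1 * v.2 ^ β.2 := by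
      have hzero : ∀ β ∈ Aj, β ∉ Aj.filter (fun β => β.1 + β.2 = j) →
          c β * v.1 ^ β.1 * v.2 ^ β.2 * (0:ℝ) ^ (β.1 + β.2 - j) = 0 := by
        intro β hβ hβn
        have hjβ : j ≤ β.1 + β.2 := (Finset.mem_filter.1 hβ).2
        have hne : β.1 + β.2 ≠ j := fun h => hβn (Finset.mem_filter.2 ⟨hβ, h⟩)
        rw [zero_pow (by omega)]
        ring
      calc (∑ β ∈ Aj, c β * v.1 ^ β.1 * v.2 ^ β.2 * (0:ℝ) ^ (β.1 + β.2 - j))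
          = ∑ β ∈ Aj.filter (fun β => β.1 + β.2 = j),
              c β * v.1 ^ β.1 * v.2 ^ β.2 * (0:ℝ) ^ (β.1 + β.2 - j) :=
            (Finset.sum_subset (Finset.filter_subset _ _) hzero).symm
        _ = ∑ β ∈ Aj.filter (fun β => β.1 + β.2 = j), c β * v.1 ^ β.1 * v.2 ^ β.2 := by
            refine Finset.sum_congr rfl fun β hβ => ?_
            have : β.1 + β.2 = j := (Finset.mem_filter.1 hβ).2
            rw [this]
            simp
    rw [this] at hR0
    exact hR0
  -- extract the coefficient of α₁ via a univariate polynomial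
  set Ajj := Aj.filter (fun β => β.1 + β.2 = j) with hAjj
  have hα₁Ajj : α₁ ∈ Ajj := by
    refine Finset.mem_filter.2 ⟨Finset.mem_filter.2 ⟨hα₁A, by omega⟩, by omega⟩
  set p : Polynomial ℝ := ∑ β ∈ Ajj, Polynomial.C (c β) * Polynomial.X ^ β.1 with hp
  have hev : ∀ s : ℝ, p.eval s = 0 := by
    intro s
    have := hs2 (s, 1)
    simp only [one_pow, mul_one] at this
    rw [hp]
    rw [Polynomial.eval_finset_sum]
    simpa using this
  have hp0 : p = 0 := Polynomial.funext (by simp [hev])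
  have hcoeff : p.coeff α₁.1 = c α₁ := by
    rw [hp, Polynomial.finset_sum_coeff]
    rw [Finset.sum_eq_single α₁]
    · simp
    · intro β hβ hne
      have hβj : β.1 + β.2 = j := (Finset.mem_filter.1 hβ).2
      have : β.1 ≠ α₁.1 := by
        intro h
        apply hne
        have : β.2 = α₁.2 := by omega
        exact Prod.ext h this
      rw [Polynomial.coeff_C_mul, Polynomial.coeff_X_pow]
      simp [this]
      intro h
      exact absurd h.symm this
    · intro h
      exact absurd hα₁Ajj h
  rw [hp0] at hcoeff
  simp at hcoeff
  exact hα₁c hcoeff.symm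

/-- Lemma B: littleO implies vanishing of partial derivatives -/
theorem isLittleO_vanish {f : ℝ × ℝ → ℝ} {U : Set (ℝ × ℝ)} (hU : IsOpen U)
    (h0 : (0 : ℝ × ℝ) ∈ U) (hf : ContDiffOn ℝ (⊤ : ℕ∞) f U) (k : ℕ)
    (ho : (fun x => f x) =o[nhds (0 : ℝ × ℝ)] fun x => ‖x‖ ^ k) :
    VanishTo k f := by
  set c : ℕ × ℕ → ℝ := fun α => pD α f 0 / ((α.1.factorial : ℝ) * (α.2.factorial : ℝ)) with hc
  set P : ℝ × ℝ → ℝ := fun x => ∑ β ∈ Ak k, c β * x.1 ^ β.1 * x.2 ^ β.2 with hPdef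
  have hPsm : ContDiffOn ℝ (⊤ : ℕ∞) P U := by
    apply ContDiff.contDiffOn
    apply ContDiff.sum
    intro β _
    exact (contDiff_const.mul (contDiff_fst.pow _)).mul (contDiff_snd.pow _)
  have hfac : ∀ α : ℕ × ℕ, ((α.1.factorial : ℝ) * (α.2.factorial : ℝ)) ≠ 0 := by
    intro α
    positivity
  have hPα : ∀ α ∈ Ak k, pD α P 0 = pD α f 0 := by
    intro α hα
    rw [hPdef]
    rw [pD_P_zero c hα, hc]
    field_simp
  have hvan : VanishTo k (fun w => f w - P w) := by
    intro α hα
    rw [pD_sub hU hf hPsm α h0, hPα α (mem_Ak.2 hα), sub_self]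
  have hA := vanish_isLittleO hU h0 k _ (ContDiffOn.sub hf hPsm) hvan
  have hPo : (fun x => P x) =o[nhds (0 : ℝ × ℝ)] fun x => ‖x‖ ^ k := by
    have := ho.sub hA
    refine this.congr_left fun x => ?_
    ring
  have hczero := poly_vanish c hPo
  intro α hα
  have h1 := hczero α (mem_Ak.2 hα)
  rw [hc] at h1
  simp only [div_eq_zero_iff] at h1
  rcases h1 with h1 | h1
  · exact h1
  · exact absurd h1 (hfac α)


/-! auxiliary lemmas about the Newton distance -/

theorem mem_ndSet {f : ℝ × ℝ → ℝ} {α : ℕ × ℕ} (hα : α ∈ taylorSupport f) {m : ℕ}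
    (h1 : α.1 ≤ m) (h2 : α.2 ≤ m) (hm : 0 < m) :
    ((m : ℝ)) ∈ {t : ℝ | 0 < t ∧ (t, t) ∈ newtonPolygon f} := by
  constructor
  · exact_mod_cast hm
  · apply subset_convexHull
    apply mem_iUnion₂.2
    exact ⟨α, hα, by constructor <;> simpa using by exact_mod_cast ‹_›⟩

theorem ndSet_bddBelow (f : ℝ × ℝ → ℝ) :
    BddBelow {t : ℝ | 0 < t ∧ (t, t) ∈ newtonPolygon f} :=
  ⟨0, fun t ht => ht.1.le⟩

theorem newtonDist_le {f : ℝ × ℝ → ℝ} {α : ℕ × ℕ} (hα : α ∈ taylorSupport f) {m : ℕ}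
    (h1 : α.1 ≤ m) (h2 : α.2 ≤ m) (hm : 0 < m) : newtonDist f ≤ m :=
  csInf_le (ndSet_bddBelow f) (mem_ndSet hα h1 h2 hm)

theorem two_le_newtonDist {f : ℝ × ℝ → ℝ} {α₁ : ℕ × ℕ} (hα₁ : α₁ ∈ taylorSupport f)
    (h4 : ∀ α ∈ taylorSupport f, 4 ≤ α.1 + α.2) : 2 ≤ newtonDist f := by
  have hsum := h4 α₁ hα₁
  have hmem := mem_ndSet hα₁ (le_max_left α₁.1 α₁.2) (le_max_right α₁.1 α₁.2)
    (by omega)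
  apply le_csInf ⟨_, hmem⟩
  intro t ht
  -- the Newton polygon is contained in the halfspace s₁ + s₂ ≥ 4
  have hsub : newtonPolygon f ⊆ {s : ℝ × ℝ | (4 : ℝ) ≤ s.1 + s.2} := by
    apply convexHull_min
    · intro s hs
      rcases mem_iUnion₂.1 hs with ⟨α, hα, hsα⟩
      have h4' : (4 : ℝ) ≤ (α.1 : ℝ) + (α.2 : ℝ) := by exact_mod_cast h4 α hα
      have := hsα.1
      have := hsα.2
      simp only [Set.mem_setOf_eq]
      linarith [hsα.1, hsα.2]
    · have : {s : ℝ × ℝ | (4 : ℝ) ≤ s.1 + s.2} =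
          ((LinearMap.fst ℝ ℝ ℝ) + (LinearMap.snd ℝ ℝ ℝ)) ⁻¹' (Ici (4 : ℝ)) := by
        ext s; simp [Set.mem_preimage]
      rw [this]
      exact (convex_Ici (4 : ℝ)).linear_preimage _
  have := hsub ht.2
  simp only [Set.mem_setOf_eq] at this
  linarith

theorem newtonDist_eq_zero {f : ℝ × ℝ → ℝ} (h : taylorSupport f = ∅) : newtonDist f = 0 := by
  have : {t : ℝ | 0 < t ∧ (t, t) ∈ newtonPolygon f} = ∅ := by
    ext t
    simp only [Set.mem_setOf_eq, Set.mem_empty_iff_false, iff_false, not_and]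
    intro _
    rw [newtonPolygon, h]
    simp
  rw [newtonDist, this, Real.sInf_empty]

/-! coordinate changes -/

theorem isLocalCoordChange_id : IsLocalCoordChange id :=
  ⟨rfl, univ, univ, isOpen_univ, isOpen_univ, mem_univ 0, mem_univ 0, contDiffOn_id,
    mapsTo_univ _ _, id, contDiffOn_id, mapsTo_univ _ _, fun x _ => rfl, fun x _ => rfl⟩

theorem contDiff_linear (L : (ℝ × ℝ) →ₗ[ℝ] ℝ × ℝ) : ContDiff ℝ (⊤ : ℕ∞) ⇑L := by
  have h := (LinearMap.toContinuousLinearMap L).contDiff (n := ((⊤ : ℕ∞) : WithTop ℕ∞))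
  rwa [LinearMap.coe_toContinuousLinearMap'] at h

theorem isLocalCoordChange_linear (L : (ℝ × ℝ) ≃ₗ[ℝ] ℝ × ℝ) : IsLocalCoordChange ⇑L :=
  ⟨map_zero L, univ, univ, isOpen_univ, isOpen_univ, mem_univ 0, mem_univ 0,
    (contDiff_linear L.toLinearMap).contDiffOn, mapsTo_univ _ _, ⇑L.symm,
    (contDiff_linear L.symm.toLinearMap).contDiffOn, mapsTo_univ _ _,
    fun x _ => L.symm_apply_apply x, fun x _ => L.apply_symm_apply x⟩

/-- transfer of vanishing along a coordinate change -/
theorem vanish_comp {ϕ : ℝ × ℝ → ℝ} {U : Set (ℝ × ℝ)} (hUo : IsOpen U)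
    (hU0 : (0 : ℝ × ℝ) ∈ U) (hϕ : ContDiffOn ℝ (⊤ : ℕ∞) ϕ U)
    {g : ℝ × ℝ → ℝ × ℝ} {W : Set (ℝ × ℝ)} (hWo : IsOpen W) (hW0 : (0 : ℝ × ℝ) ∈ W)
    (hg : ContDiffOn ℝ (⊤ : ℕ∞) g W) (hg0 : g 0 = 0) (k : ℕ) (hv : VanishTo k ϕ) :
    VanishTo k (ϕ ∘ g) := by
  have hgd : DifferentiableAt ℝ g 0 :=
    (hg.differentiableOn (by simp)).differentiableAt (hWo.mem_nhds hW0)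
  have ho := vanish_isLittleO hUo hU0 k ϕ hϕ hv
  have ho2 := isLittleO_comp ho hgd hg0
  have hOopen : IsOpen (W ∩ g ⁻¹' U) := hg.continuousOn.isOpen_inter_preimage hWo hUo
  have hO0 : (0 : ℝ × ℝ) ∈ W ∩ g ⁻¹' U := ⟨hW0, by simp [Set.mem_preimage, hg0, hU0]⟩
  have hsm : ContDiffOn ℝ (⊤ : ℕ∞) (ϕ ∘ g) (W ∩ g ⁻¹' U) :=
    hϕ.comp (hg.mono inter_subset_left) (fun x hx => hx.2)
  exact isLittleO_vanish hOopen hO0 hsm k ho2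

/-- converse transfer: vanishing of `ϕ ∘ y` implies vanishing of `ϕ`, for `y` a local
coordinate change -/
theorem vanish_of_comp {ϕ : ℝ × ℝ → ℝ} {Uϕ : Set (ℝ × ℝ)} (hUo : IsOpen Uϕ)
    (hU0 : (0 : ℝ × ℝ) ∈ Uϕ) (hϕ : ContDiffOn ℝ (⊤ : ℕ∞) ϕ Uϕ)
    {y : ℝ × ℝ → ℝ × ℝ} (hy : IsLocalCoordChange y) (k : ℕ) (hv : VanishTo k (ϕ ∘ y)) :
    VanishTo k ϕ := by
  obtain ⟨hy0, U, V, hUopen, hVopen, hU0', hV0, hyC, hymaps, z, hzC, hzmaps, hzy, hyz⟩ := hy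
  have hz0 : z 0 = 0 := by
    have := hzy 0 hU0'
    rwa [hy0] at this
  -- ϕ ∘ y is smooth near 0
  have hOopen : IsOpen (U ∩ y ⁻¹' Uϕ) := hyC.continuousOn.isOpen_inter_preimage hUopen hUo
  have hO0 : (0 : ℝ × ℝ) ∈ U ∩ y ⁻¹' Uϕ := ⟨hU0', by simp [Set.mem_preimage, hy0, hU0]⟩
  have hFsm : ContDiffOn ℝ (⊤ : ℕ∞) (ϕ ∘ y) (U ∩ y ⁻¹' Uϕ) :=
    hϕ.comp (hyC.mono inter_subset_left) (fun x hx => hx.2)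
  -- little-o for ϕ ∘ y, then for (ϕ ∘ y) ∘ z, then for ϕ
  have ho := vanish_isLittleO hOopen hO0 k (ϕ ∘ y) hFsm hv
  have hzd : DifferentiableAt ℝ z 0 :=
    (hzC.differentiableOn (by simp)).differentiableAt (hVopen.mem_nhds hV0)
  have ho2 := isLittleO_comp ho hzd hz0
  have heq : ϕ =ᶠ[𝓝 (0 : ℝ × ℝ)] fun x => (ϕ ∘ y) (z x) := by
    filter_upwards [hVopen.mem_nhds hV0] with x hx
    simp only [Function.comp_apply]
    rw [hyz x hx]
  have ho3 : (fun x => ϕ x) =o[𝓝 (0 : ℝ × ℝ)] fun x => ‖x‖ ^ k :=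
    heq.trans_isLittleO ho2
  exact isLittleO_vanish hUo hU0 hϕ k ho3


end Aux

/-- if all derivatives of `ϕ` of order `≤ 3` vanish at `0` (i.e. `ϕ₂ ≡ 0` and
`ϕ₃ ≡ 0`) and `h(ϕ) ≤ 2`, then `h_lin(ϕ) = h(ϕ)`, i.e. the coordinate system is linearly
adapted to `ϕ`. -/
theorem stmt17 (ϕ : ℝ × ℝ → ℝ) (hsm : ∃ U ∈ 𝓝 (0 : ℝ × ℝ), ContDiffOn ℝ (⊤ : ℕ∞) ϕ U)
    (hrank : ∀ α : ℕ × ℕ, α.1 + α.2 ≤ 3 → pD α ϕ 0 = 0)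
    (hht : height ϕ ≤ 2) :
    linHeight ϕ = height ϕ := by
  classical
  obtain ⟨Uϕ', hUϕmem, hϕsm'⟩ := hsm
  rcases _root_.mem_nhds_iff.1 hUϕmem with ⟨Uϕ, hUsub, hUopen, hU0⟩
  have hϕsm : ContDiffOn ℝ (⊤ : ℕ∞) ϕ Uϕ := hϕsm'.mono hUsub
  set Sh := {d : ℝ | ∃ y : ℝ × ℝ → ℝ × ℝ, IsLocalCoordChange y ∧ d = newtonDist (ϕ ∘ y)}
    with hSh
  set Slin := {d : ℝ | ∃ L : (ℝ × ℝ) ≃ₗ[ℝ] ℝ × ℝ, d = newtonDist (ϕ ∘ L)} with hSlin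
  have hsub : Slin ⊆ Sh := by
    rintro d ⟨L, rfl⟩
    exact ⟨⇑L, isLocalCoordChange_linear L, rfl⟩
  have hrefl : (ϕ ∘ ⇑(LinearEquiv.refl ℝ (ℝ × ℝ))) = ϕ := by
    funext x; rfl
  have hmemlin : newtonDist ϕ ∈ Slin := ⟨LinearEquiv.refl ℝ (ℝ × ℝ), by rw [hrefl]⟩
  -- key transfer facts
  have hkey1 : ∀ y : ℝ × ℝ → ℝ × ℝ, IsLocalCoordChange y → ∀ k : ℕ, VanishTo k ϕ →
      VanishTo k (ϕ ∘ y) := by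
    intro y hy k hv
    obtain ⟨hy0, U, V, hUopen', hVopen', hU0', hV0', hyC, _, _⟩ := hy
    exact vanish_comp hUopen hU0 hϕsm hUopen' hU0' hyC hy0 k hv
  by_cases hflat : ∀ α : ℕ × ℕ, pD α ϕ 0 = 0
  · -- flat case: all Newton distances are zero
    have hvall : ∀ k, VanishTo k ϕ := fun k α _ => hflat α
    have hShz : ∀ d ∈ Sh, d = 0 := by
      rintro d ⟨y, hy, rfl⟩
      apply newtonDist_eq_zero
      ext α
      simp only [taylorSupport, Set.mem_setOf_eq, Set.mem_empty_iff_false, iff_false, not_and,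
        not_not]
      intro _
      exact hkey1 y hy (α.1 + α.2) (hvall _) α le_rfl
    have hid : (0 : ℝ) ∈ Sh := by
      refine ⟨id, isLocalCoordChange_id, ?_⟩
      rw [Function.comp_id]
      symm
      apply newtonDist_eq_zero
      ext α
      simp only [taylorSupport, Set.mem_setOf_eq, Set.mem_empty_iff_false, iff_false, not_and,
        not_not]
      exact fun _ => hflat α
    have hSheq : Sh = {0} := Set.eq_singleton_iff_unique_mem.2 ⟨hid, hShz⟩
    have hSlineq : Slin = {0} := by
      apply Set.eq_singleton_iff_unique_mem.2
      constructor
      · have := hShz _ (hsub hmemlin)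
        rwa [this] at hmemlin
      · exact fun d hd => hShz d (hsub hd)
    rw [linHeight, height, ← hSh, ← hSlin, hSheq, hSlineq]
  · -- non-flat case
    push_neg at hflat
    obtain ⟨α₀, hα₀⟩ := hflat
    have hex : ∃ n : ℕ, ∃ α : ℕ × ℕ, α.1 + α.2 = n ∧ pD α ϕ 0 ≠ 0 :=
      ⟨α₀.1 + α₀.2, α₀, rfl, hα₀⟩
    set k := Nat.find hex with hkdef
    obtain ⟨αk, hαksum, hαk⟩ := Nat.find_spec hex
    have hk4 : 4 ≤ k := by
      by_contra h
      exact hαk (hrank αk (by omega))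
    have hnotvk : ¬ VanishTo k ϕ := fun hv => hαk (hv αk (by omega))
    have hαkT : αk ∈ taylorSupport ϕ := by
      refine ⟨?_, hαk⟩
      intro h
      have hz : αk.1 + αk.2 = 0 := by rw [h]; rfl
      omega
    -- every element of Sh is at most k
    have hub : ∀ d ∈ Sh, d ≤ (k : ℝ) := by
      rintro d ⟨y, hy, rfl⟩
      have hnv : ¬ VanishTo k (ϕ ∘ y) := by
        intro hv
        exact hnotvk (vanish_of_comp hUopen hU0 hϕsm hy k hv)
      rw [VanishTo] at hnv
      push_neg at hnv
      obtain ⟨α, hαle, hα⟩ := hnv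
      have hα0 : α ≠ 0 := by
        rintro rfl
        apply hα
        have h00 : pD 0 (ϕ ∘ y) 0 = ϕ (y 0) := rfl
        rw [h00, hy.1]
        simpa [pD] using hrank (0, 0) (by simp)
      exact newtonDist_le ⟨hα0, hα⟩ (by omega) (by omega) (by omega)
    have hbdd : BddAbove Sh := ⟨(k : ℝ), hub⟩
    have hShne : Sh.Nonempty := ⟨_, hsub hmemlin⟩
    have hSlinne : Slin.Nonempty := ⟨_, hmemlin⟩
    have hle1 : linHeight ϕ ≤ height ϕ := csSup_le_csSup hbdd hSlinne hsub
    have h2d : (2 : ℝ) ≤ newtonDist ϕ := by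
      apply two_le_newtonDist hαkT
      intro α hα
      by_contra h
      exact hα.2 (hrank α (by omega))
    have hle2 : newtonDist ϕ ≤ linHeight ϕ := le_csSup (hbdd.mono hsub) hmemlin
    have hle3 : height ϕ ≤ linHeight ϕ := by linarith
    linarith
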